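/- A set S ⊆ E is keepable if and only if there is no alternating walk with respect to S. -/

import Mathlib

def Keepable {V : Type*} (G : SimpleGraph V) (S : Set (Sym2 V)) : Prop :=
  ∃ p : V → ℝ, (∀ v, 0 ≤ p v ∧ p v ≤ 1) ∧
    ∀ u v, G.Adj u v → (s(u, v) ∈ S ↔ p u + p v ≤ 1)

def HasAltWalk {V : Type*} (G : SimpleGraph V) (S : Set (Sym2 V)) : Prop :=
  ∃ (ℓ : ℕ) (w : ℕ → V), 0 < ℓ ∧ Even ℓ ∧ w ℓ = w 0 ∧
    ∀ i < ℓ, G.Adj (w i) (w (i + 1)) ∧ (s(w i, w (i + 1)) ∈ S ↔ Odd i)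

namespace KeepableAux

variable {V : Type*}

/-- Step relation on states `(vertex, nextEdgeIsInS)`. -/
def Rel (G : SimpleGraph V) (S : Set (Sym2 V)) (s t : V × Bool) : Prop :=
  G.Adj s.1 t.1 ∧ t.2 = !s.2 ∧ (s(s.1, t.1) ∈ S ↔ s.2 = true)

def IsWalk (G : SimpleGraph V) (S : Set (Sym2 V)) (w : ℕ → V × Bool) (n : ℕ) : Prop :=
  ∀ i < n, Rel G S (w i) (w (i + 1))

lemma not_iter_even {m : ℕ} (hm : Even m) (b : Bool) : (!·)^[m] b = b := by
  obtain ⟨c, rfl⟩ := hm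
  induction c with
  | zero => simp
  | succ d ih =>
    have h : d + 1 + (d + 1) = (d + d) + 2 := by omega
    rw [h, Function.iterate_add_apply]
    simpa using ih

lemma not_iter_odd {m : ℕ} (hm : Odd m) (b : Bool) : (!·)^[m] b = !b := by
  obtain ⟨c, rfl⟩ := hm
  rw [Function.iterate_add_apply, not_iter_even (⟨c, by ring⟩ : Even (2 * c))]
  simp

lemma not_iter_false_iff (k : ℕ) : ((!·)^[k] false = true) ↔ Odd k := by
  rcases Nat.even_or_odd k with h | h
  · simp [not_iter_even h, Nat.not_odd_iff_even.mpr h]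
  · simp [not_iter_odd h, h]

lemma not_iter_mod {ℓ : ℕ} (he : Even ℓ) (m : ℕ) (b : Bool) :
    (!·)^[m % ℓ] b = (!·)^[m] b := by
  conv_rhs => rw [← Nat.div_add_mod m ℓ, Function.iterate_add_apply,
    not_iter_even (he.mul_right (m / ℓ))]

lemma walk_snd {G : SimpleGraph V} {S : Set (Sym2 V)} {w : ℕ → V × Bool} {n : ℕ}
    (hw : IsWalk G S w n) : ∀ k ≤ n, (w k).2 = (!·)^[k] ((w 0).2) := by
  intro k hk
  induction k with
  | zero => simp
  | succ m ih =>
    rw [(hw m (by omega)).2.1, ih (by omega), Function.iterate_succ_apply']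

lemma hasAltWalk_of_cycle {G : SimpleGraph V} {S : Set (Sym2 V)} {w : ℕ → V × Bool}
    {n i j : ℕ} (hw : IsWalk G S w n) (hij : i < j) (hjn : j ≤ n) (heqw : w i = w j) :
    HasAltWalk G S := by
  classical
  set ℓ := j - i with hℓdef
  have hℓpos : 0 < ℓ := by omega
  have hws : IsWalk G S (fun k => w (i + k)) ℓ := fun k hk => hw (i + k) (by omega)
  have hpar : ∀ k ≤ ℓ, (w (i + k)).2 = (!·)^[k] ((w i).2) := by
    intro k hk
    have h := walk_snd hws k hk
    simpa using h
  have hiℓ : i + ℓ = j := by omega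
  have heven : Even ℓ := by
    by_contra hodd
    have h1 : (w (i + ℓ)).2 = !((w i).2) := by
      rw [hpar ℓ le_rfl, not_iter_odd (Nat.not_even_iff_odd.mp hodd)]
    rw [hiℓ, ← heqw] at h1
    simp at h1
  have hℓ2 : 2 ≤ ℓ := by obtain ⟨c, hc⟩ := heven; omega
  set o : ℕ := if (w i).2 = false then 0 else 1 with ho_def
  have ho_le : o ≤ 1 := by rw [ho_def]; split <;> omega
  have ho_lt : o < ℓ := by omega
  have ho : (w (i + o)).2 = false := by
    by_cases hb : (w i).2 = false
    · simp [ho_def, hb]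
    · have h1 : o = 1 := by simp [ho_def, hb]
      rw [h1, (hw i (by omega)).2.1]
      simp [Bool.not_eq_false] at hb
      simp [hb]
  have hcyc : ∀ m < ℓ, Rel G S (w (i + m)) (w (i + (m + 1) % ℓ)) := by
    intro m hm
    by_cases h : m + 1 < ℓ
    · rw [Nat.mod_eq_of_lt h]; exact hw (i + m) (by omega)
    · have hm1 : m + 1 = ℓ := by omega
      have h0 : (m + 1) % ℓ = 0 := by rw [hm1, Nat.mod_self]
      rw [h0]
      have h2 : w (i + 0) = w (i + m + 1) := by
        rw [Nat.add_zero, heqw]; congr 1; omega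
      rw [h2]
      exact hw (i + m) (by omega)
  refine ⟨ℓ, fun k => (w (i + (o + k) % ℓ)).1, hℓpos, heven, ?_, ?_⟩
  · have h1 : (o + ℓ) % ℓ = o := by rw [Nat.add_mod_right, Nat.mod_eq_of_lt ho_lt]
    have h2 : (o + 0) % ℓ = o := by rw [Nat.add_zero, Nat.mod_eq_of_lt ho_lt]
    simp only [h1, h2]
  · intro k hk
    have hm : (o + k) % ℓ < ℓ := Nat.mod_lt _ hℓpos
    have hrel := hcyc _ hm
    have hidx : (o + (k + 1)) % ℓ = ((o + k) % ℓ + 1) % ℓ := by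
      conv_lhs => rw [show o + (k + 1) = (o + k) + 1 from rfl]
      rw [Nat.add_mod (o + k) 1 ℓ, Nat.mod_eq_of_lt (show 1 < ℓ by omega)]
    simp only [hidx]
    refine ⟨hrel.1, ?_⟩
    rw [hrel.2.2, hpar _ hm.le, not_iter_mod heven, add_comm o k,
      Function.iterate_add_apply, ← hpar o ho_lt.le, ho, not_iter_false_iff]

lemma walk_len_le [Fintype V] {G : SimpleGraph V} {S : Set (Sym2 V)}
    (hna : ¬ HasAltWalk G S) {w : ℕ → V × Bool} {n : ℕ} (hw : IsWalk G S w n) :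
    n ≤ Fintype.card V * 2 := by
  by_contra hlt
  push_neg at hlt
  have hcard : Fintype.card (V × Bool) < Fintype.card (Fin (n + 1)) := by
    simp [Fintype.card_prod]; omega
  obtain ⟨a, b, hab, heq⟩ :=
    Fintype.exists_ne_map_eq_of_card_lt (fun k : Fin (n + 1) => w k) hcard
  have ha := a.isLt
  have hb := b.isLt
  rcases Nat.lt_or_ge a.val b.val with h | h
  · exact hna (hasAltWalk_of_cycle hw h (by omega) heq)
  · have h' : b.val < a.val := by
      rcases Nat.lt_or_ge b.val a.val with h2 | h2
      · exact h2
      · exact absurd (Fin.ext (by omega)) hab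
    exact hna (hasAltWalk_of_cycle hw h' (by omega) heq.symm)

end KeepableAux

open KeepableAux in
/-- `S` is keepable if and only if there is no alternating walk with respect to `S`. -/
theorem keepable_iff_no_altWalk {V : Type*} [Fintype V]
    (G : SimpleGraph V) (S : Set (Sym2 V)) (hS : S ⊆ G.edgeSet) :
    Keepable G S ↔ ¬HasAltWalk G S := by
  constructor
  · rintro ⟨p, hp, hedge⟩ ⟨ℓ, w, hpos, heven, hclose, hstep⟩
    have key : ∀ k, 2 * (k + 1) ≤ ℓ → p (w (2 * (k + 1))) < p (w (2 * k)) := by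
      intro k hk
      have h1 := hstep (2 * k) (by omega)
      have h2 := hstep (2 * k + 1) (by omega)
      have hn1 : ¬ Odd (2 * k) := by
        exact Nat.not_odd_iff_even.mpr ⟨k, by ring⟩
      have hs1 : ¬ (p (w (2 * k)) + p (w (2 * k + 1)) ≤ 1) := by
        rw [← hedge _ _ h1.1, h1.2]
        exact hn1
      have hs2 : p (w (2 * k + 1)) + p (w (2 * k + 1 + 1)) ≤ 1 :=
        (hedge _ _ h2.1).mp (h2.2.mpr ⟨k, by ring⟩)
      push_neg at hs1
      have hidx : 2 * (k + 1) = 2 * k + 1 + 1 := by ring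
      rw [hidx]
      linarith
    have mono : ∀ k, 0 < k → 2 * k ≤ ℓ → p (w (2 * k)) < p (w 0) := by
      intro k
      induction k with
      | zero => intro h; omega
      | succ m ih =>
        intro _ hk
        rcases Nat.eq_zero_or_pos m with rfl | hm
        · simpa using key 0 (by omega)
        · exact lt_trans (key m hk) (ih hm (by omega))
    obtain ⟨m, hm⟩ := heven
    have hm' : ℓ = 2 * m := by omega
    have hfin := mono m (by omega) (by omega)
    rw [← hm', hclose] at hfin
    exact lt_irrefl _ hfin
  · intro hna
    classical
    set N := Fintype.card V * 2 with hN
    set L : V × Bool → Set ℕ :=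
      fun s => {n | ∃ w : ℕ → V × Bool, w 0 = s ∧ IsWalk G S w n} with hL
    have hmem0 : ∀ s, 0 ∈ L s := fun s => ⟨fun _ => s, rfl, fun i hi => absurd hi (by omega)⟩
    have hbdd : ∀ s, ∀ n ∈ L s, n ≤ N := by
      rintro s n ⟨w, -, hw⟩
      exact walk_len_le hna hw
    set ρ : V × Bool → ℕ := fun s => sSup (L s) with hρ
    have hρ_le : ∀ s, ρ s ≤ N := fun s => csSup_le ⟨0, hmem0 s⟩ (hbdd s)
    have hρ_rec : ∀ s t, Rel G S s t → ρ t + 1 ≤ ρ s := by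
      intro s t hst
      have hmem' : ρ t ∈ L t := Nat.sSup_mem ⟨0, hmem0 t⟩ ⟨N, fun n hn => hbdd t n hn⟩
      obtain ⟨w, hw0, hw⟩ := hmem'
      refine le_csSup ⟨N, fun n hn => hbdd s n hn⟩ ?_
      refine ⟨fun k => Nat.rec s (fun m _ => w m) k, rfl, ?_⟩
      intro i hi
      cases i with
      | zero =>
        show Rel G S s (w 0)
        rw [hw0]; exact hst
      | succ m => exact hw m (by omega)
    set h : V → ℤ := fun v => (ρ (v, false) : ℤ) - (ρ (v, true) : ℤ) with hh
    have hhabs : ∀ v, -(N : ℤ) ≤ h v ∧ h v ≤ N := by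
      intro v
      have h1 := hρ_le (v, false)
      have h2 := hρ_le (v, true)
      simp only [hh]
      omega
    have hS_edge : ∀ u v, G.Adj u v → s(u, v) ∈ S → h u + h v ≤ -2 := by
      intro u v hadj hmS
      have r1 : Rel G S (u, true) (v, false) := ⟨hadj, rfl, by simp [hmS]⟩
      have r2 : Rel G S (v, true) (u, false) :=
        ⟨hadj.symm, rfl, by rw [show s(v, u) = s(u, v) from Sym2.eq_swap]; simp [hmS]⟩
      have g1 := hρ_rec _ _ r1
      have g2 := hρ_rec _ _ r2
      simp only [hh]
      omega
    have hNS_edge : ∀ u v, G.Adj u v → s(u, v) ∉ S → 2 ≤ h u + h v := by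
      intro u v hadj hmS
      have r1 : Rel G S (u, false) (v, true) := ⟨hadj, rfl, by simp [hmS]⟩
      have r2 : Rel G S (v, false) (u, true) :=
        ⟨hadj.symm, rfl, by rw [show s(v, u) = s(u, v) from Sym2.eq_swap]; simp [hmS]⟩
      have g1 := hρ_rec _ _ r1
      have g2 := hρ_rec _ _ r2
      simp only [hh]
      omega
    set D : ℝ := 2 * N + 2 with hD
    have hDpos : (0 : ℝ) < D := by rw [hD]; positivity
    refine ⟨fun v => 1 / 2 + (h v : ℝ) / D, ?_, ?_⟩
    · intro v
      obtain ⟨hl, hu⟩ := hhabs v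
      have hl' : (-(N : ℝ)) ≤ (h v : ℝ) := by exact_mod_cast hl
      have hu' : ((h v : ℝ)) ≤ N := by exact_mod_cast hu
      have k1 : (h v : ℝ) / D ≤ 1 / 2 := by
        rw [div_le_iff₀ hDpos]
        rw [hD]; linarith
      have k2 : -(1 / 2 : ℝ) ≤ (h v : ℝ) / D := by
        rw [le_div_iff₀ hDpos]
        rw [hD]; linarith
      constructor <;> linarith
    · intro u v hadj
      by_cases hm : s(u, v) ∈ S
      · have hc : ((h u : ℝ) + h v) ≤ -2 := by exact_mod_cast hS_edge u v hadj hm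
        have hsum : (h u : ℝ) / D + (h v : ℝ) / D ≤ 0 := by
          rw [← add_div]
          exact div_nonpos_of_nonpos_of_nonneg (by linarith) hDpos.le
        simp only [hm, true_iff]
        linarith
      · have hc : (2 : ℝ) ≤ (h u : ℝ) + h v := by exact_mod_cast hNS_edge u v hadj hm
        have hsum : 0 < (h u : ℝ) / D + (h v : ℝ) / D := by
          rw [← add_div]
          exact div_pos (by linarith) hDpos
        simp only [hm, false_iff, not_le]
        linarith
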